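/- Let n ≥ 2 and let q : EuclideanSpace ℝ (Fin n) → ℝ be continuous. Then ∫_{SO(n)} ( ∫_{‖x‖ ≤ 1} (q(x) − q(R x))² dx ) dμ(R) = 2 ∫_{‖x‖ ≤ 1} (q(x) − Pq(x))² dx, where the inner integrals are over the closed unit ball with respect to Lebesgue measure. -/

import Mathlib

open MeasureTheory Matrix

set_option synthInstance.maxHeartbeats 1000000
set_option maxHeartbeats 4000000

noncomputable section

instance {n : ℕ} : MeasurableSpace (Matrix (Fin n) (Fin n) ℝ) :=
  inferInstanceAs (MeasurableSpace (Fin n → Fin n → ℝ))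

/-- `SO(n)`: the special orthogonal group of real `n × n` matrices, as a type. -/
abbrev SOn (n : ℕ) : Type :=
  Matrix.specialOrthogonalGroup (Fin n) ℝ

/-- The action of a matrix on `EuclideanSpace ℝ (Fin n)` by matrix–vector multiplication. -/
def matAct {n : ℕ} (R : Matrix (Fin n) (Fin n) ℝ) (x : EuclideanSpace ℝ (Fin n)) :
    EuclideanSpace ℝ (Fin n) :=
  (EuclideanSpace.equiv (Fin n) ℝ).symm (R.mulVec (EuclideanSpace.equiv (Fin n) ℝ x))

variable {n : ℕ}

instance : BorelSpace (Matrix (Fin n) (Fin n) ℝ) :=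
  inferInstanceAs (BorelSpace (Fin n → Fin n → ℝ))

instance : SecondCountableTopology (Matrix (Fin n) (Fin n) ℝ) :=
  inferInstanceAs (SecondCountableTopology (Fin n → Fin n → ℝ))

instance : SecondCountableTopology (SOn n) :=
  TopologicalSpace.Subtype.secondCountableTopology _

instance : BorelSpace (SOn n) := Subtype.borelSpace _

lemma SOn.star_mem (S : SOn n) : star S.1 ∈ specialOrthogonalGroup (Fin n) ℝ := by
  constructor
  · exact Unitary.star_mem S.2.1
  · show (star S.1).det = 1
    have h : S.1.det = 1 := S.2.2
    simp [Matrix.star_eq_conjTranspose, Matrix.det_conjTranspose, h]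

instance : Group (SOn n) :=
  { (inferInstance : Monoid (SOn n)) with
    inv := fun S => ⟨star S.1, SOn.star_mem S⟩
    inv_mul_cancel := fun S => Subtype.ext (by
      show star S.1 * S.1 = 1
      exact S.2.1.1) }

instance : IsTopologicalGroup (SOn n) where
  continuous_mul := by
    apply Continuous.subtype_mk
    exact ((continuous_subtype_val.comp continuous_fst).matrix_mul
      (continuous_subtype_val.comp continuous_snd))
  continuous_inv := by
    apply Continuous.subtype_mk
    exact continuous_star.comp continuous_subtype_val

lemma matAct_mul (A B : Matrix (Fin n) (Fin n) ℝ) (x : EuclideanSpace ℝ (Fin n)) :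
    matAct A (matAct B x) = matAct (A * B) x := by
  simp [matAct, Matrix.mulVec_mulVec]
  exact Matrix.mulVec_mulVec (M := A) (N := B) ((EuclideanSpace.equiv (Fin n) ℝ) x)

lemma matAct_one (x : EuclideanSpace ℝ (Fin n)) : matAct 1 x = x := by
  simp [matAct]

lemma norm_matAct (S : SOn n) (x : EuclideanSpace ℝ (Fin n)) : ‖matAct S.1 x‖ = ‖x‖ := by
  have h1 : star S.1 * S.1 = 1 := S.2.1.1
  rw [EuclideanSpace.norm_eq, EuclideanSpace.norm_eq]
  congr 1
  have key : ∀ v : Fin n → ℝ, (S.1 *ᵥ v) ⬝ᵥ (S.1 *ᵥ v) = v ⬝ᵥ v := by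
    intro v
    rw [Matrix.dotProduct_mulVec, ← Matrix.mulVec_transpose, Matrix.mulVec_mulVec]
    rw [Matrix.star_eq_conjTranspose, Matrix.conjTranspose_eq_transpose_of_trivial] at h1
    rw [h1, Matrix.one_mulVec]
  have := key (EuclideanSpace.equiv (Fin n) ℝ x)
  simp only [dotProduct] at this
  simp only [matAct]
  simp only [Real.norm_eq_abs, sq_abs]
  calc ∑ i, (((EuclideanSpace.equiv (Fin n) ℝ).symm (S.1 *ᵥ (EuclideanSpace.equiv (Fin n) ℝ) x)) i)^2
      = ∑ i, ((S.1 *ᵥ (EuclideanSpace.equiv (Fin n) ℝ) x) i * (S.1 *ᵥ (EuclideanSpace.equiv (Fin n) ℝ) x) i) := by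
        apply Finset.sum_congr rfl; intro i _; simp [sq]
    _ = ∑ i, ((EuclideanSpace.equiv (Fin n) ℝ) x i * (EuclideanSpace.equiv (Fin n) ℝ) x i) := this
    _ = ∑ i, (x i)^2 := by apply Finset.sum_congr rfl; intro i _; simp [sq]

def rotIso (S : SOn n) : EuclideanSpace ℝ (Fin n) ≃ₗᵢ[ℝ] EuclideanSpace ℝ (Fin n) :=
  { ((EuclideanSpace.equiv (Fin n) ℝ).toLinearEquiv.trans
      ((Matrix.UnitaryGroup.toLinearEquiv ⟨S.1, S.2.1⟩).trans
        (EuclideanSpace.equiv (Fin n) ℝ).symm.toLinearEquiv)) with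
    norm_map' := fun x => by
      show ‖(EuclideanSpace.equiv (Fin n) ℝ).symm.toLinearEquiv
        (Matrix.UnitaryGroup.toLinearEquiv ⟨S.1, S.2.1⟩ ((EuclideanSpace.equiv (Fin n) ℝ) x))‖ = ‖x‖
      have : (Matrix.UnitaryGroup.toLinearEquiv (⟨S.1, S.2.1⟩ : unitaryGroup (Fin n) ℝ))
          ((EuclideanSpace.equiv (Fin n) ℝ) x) = S.1 *ᵥ ((EuclideanSpace.equiv (Fin n) ℝ) x) := by
        exact Matrix.toLin'_apply S.1 _
      rw [this]
      exact norm_matAct S x }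

lemma rotIso_apply (S : SOn n) (x : EuclideanSpace ℝ (Fin n)) : rotIso S x = matAct S.1 x := by
  show (EuclideanSpace.equiv (Fin n) ℝ).symm.toLinearEquiv
        (Matrix.UnitaryGroup.toLinearEquiv ⟨S.1, S.2.1⟩ ((EuclideanSpace.equiv (Fin n) ℝ) x)) = _
  simp [Matrix.UnitaryGroup.toLinearEquiv, Matrix.UnitaryGroup.toLin', Matrix.toLin'_apply, matAct]

lemma rotIso_preimage_ball (S : SOn n) :
    (rotIso S) ⁻¹' (Metric.closedBall (0 : EuclideanSpace ℝ (Fin n)) 1)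
      = Metric.closedBall 0 1 := by
  ext x
  simp [Metric.mem_closedBall, dist_zero_right, rotIso_apply, norm_matAct]

lemma setIntegral_matAct (S : SOn n) (g : EuclideanSpace ℝ (Fin n) → ℝ) :
    ∫ x in Metric.closedBall (0 : EuclideanSpace ℝ (Fin n)) 1, g (matAct S.1 x)
      = ∫ x in Metric.closedBall (0 : EuclideanSpace ℝ (Fin n)) 1, g x := by
  have h1 := (rotIso S).measurePreserving
  have h2 : MeasurableEmbedding (rotIso S) :=
    (rotIso S).toHomeomorph.measurableEmbedding
  have := h1.setIntegral_preimage_emb h2 g (Metric.closedBall 0 1)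
  rw [rotIso_preimage_ball] at this
  rw [← this]
  apply setIntegral_congr_fun (by measurability)
  intro x _
  show g (matAct (↑S) x) = g ((rotIso S) x)
  rw [rotIso_apply]

lemma continuous_matAct2 :
    Continuous fun p : SOn n × EuclideanSpace ℝ (Fin n) => matAct p.1.1 p.2 := by
  apply Continuous.comp (EuclideanSpace.equiv (Fin n) ℝ).symm.continuous
  exact (continuous_subtype_val.comp continuous_fst).matrix_mulVec
    ((EuclideanSpace.equiv (Fin n) ℝ).continuous.comp continuous_snd)

lemma continuous_matAct_left (y : EuclideanSpace ℝ (Fin n)) :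
    Continuous fun S : SOn n => matAct S.1 y :=
  continuous_matAct2.comp (continuous_id.prodMk continuous_const)

lemma integral_sub_sq {α : Type*} [MeasurableSpace α] (ρ : Measure α) (f g : α → ℝ)
    (hf2 : Integrable (fun x => (f x)^2) ρ) (hfg : Integrable (fun x => f x * g x) ρ)
    (hg2 : Integrable (fun x => (g x)^2) ρ) :
    ∫ x, (f x - g x)^2 ∂ρ
      = (∫ x, (f x)^2 ∂ρ) - 2 * (∫ x, f x * g x ∂ρ) + ∫ x, (g x)^2 ∂ρ := by
  have e : (fun x => (f x - g x)^2) = fun x => (((f x)^2 - 2*(f x * g x)) + (g x)^2) := by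
    funext x; ring
  have h1 : Integrable (fun x => (f x)^2 - 2*(f x * g x)) ρ := hf2.sub (hfg.const_mul 2)
  rw [e, integral_add h1 hg2, integral_sub hf2 (hfg.const_mul 2), integral_const_mul]

section invariance

variable (μ : Measure (SOn n)) [IsProbabilityMeasure μ] [μ.IsMulLeftInvariant]

lemma integral_comp_inv (f : SOn n → ℝ) (hf : Continuous f) (C : ℝ)
    (hb : ∀ s, ‖f s‖ ≤ C) : ∫ s, f s⁻¹ ∂μ = ∫ s, f s ∂μ := by
  have hcont : Continuous fun p : SOn n × SOn n => f (p.1⁻¹ * p.2) :=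
    hf.comp ((continuous_fst.inv).mul continuous_snd)
  have hint : Integrable (fun p : SOn n × SOn n => f (p.1⁻¹ * p.2)) (μ.prod μ) := by
    apply Integrable.mono' (integrable_const C)
    · exact hcont.aestronglyMeasurable
    · exact Filter.Eventually.of_forall fun p => hb _
  have hswap : ∫ s, ∫ t, f (s⁻¹ * t) ∂μ ∂μ = ∫ t, ∫ s, f (s⁻¹ * t) ∂μ ∂μ :=
    integral_integral_swap hint
  have h1 : ∫ s, ∫ t, f (s⁻¹ * t) ∂μ ∂μ = ∫ t, f t ∂μ := by
    have : ∀ s : SOn n, ∫ t, f (s⁻¹ * t) ∂μ = ∫ t, f t ∂μ := fun s =>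
      integral_mul_left_eq_self (μ := μ) f s⁻¹
    simp_rw [this]
    simp
  have h2 : ∀ t : SOn n, ∫ s, f (s⁻¹ * t) ∂μ = ∫ s, f s⁻¹ ∂μ := by
    intro t
    have := integral_mul_left_eq_self (μ := μ) (fun s => f (s⁻¹ * t)) t
    simp only [_root_.mul_inv_rev, inv_mul_cancel_right] at this
    exact this.symm
  calc ∫ s, f s⁻¹ ∂μ = ∫ t, ∫ s, f (s⁻¹ * t) ∂μ ∂μ := by simp_rw [h2]; simp
    _ = ∫ s, ∫ t, f (s⁻¹ * t) ∂μ ∂μ := hswap.symm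
    _ = ∫ s, f s ∂μ := h1

lemma integral_comp_mul_right (f : SOn n → ℝ) (hf : Continuous f) (C : ℝ)
    (hb : ∀ s, ‖f s‖ ≤ C) (g : SOn n) : ∫ s, f (s * g) ∂μ = ∫ s, f s ∂μ := by
  have h0 : Continuous fun s : SOn n => f (s⁻¹ * g) := hf.comp (continuous_inv.mul continuous_const)
  have e1 : ∫ s, f (s * g) ∂μ = ∫ s, f (s⁻¹ * g) ∂μ := by
    have := integral_comp_inv μ (fun s => f (s⁻¹ * g)) h0 C (fun s => hb _)
    simp only [inv_inv] at this
    exact this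
  have e2 : ∫ s, f (s⁻¹ * g) ∂μ = ∫ s, f s⁻¹ ∂μ := by
    have := integral_mul_left_eq_self (μ := μ) (fun s => f (s⁻¹ * g)) g
    simp only [_root_.mul_inv_rev, inv_mul_cancel_right] at this
    exact this.symm
  have e3 : ∫ s, f s⁻¹ ∂μ = ∫ s, f s ∂μ := integral_comp_inv μ f hf C hb
  rw [e1, e2, e3]

/-- The rotational average is invariant under rotations of the argument. -/
lemma integral_matAct_matAct (q : EuclideanSpace ℝ (Fin n) → ℝ) (hq : Continuous q)
    (T : SOn n) (y : EuclideanSpace ℝ (Fin n)) :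
    ∫ R : SOn n, q (matAct R.1 (matAct T.1 y)) ∂μ = ∫ R : SOn n, q (matAct R.1 y) ∂μ := by
  obtain ⟨C, hC⟩ := (isCompact_closedBall (0 : EuclideanSpace ℝ (Fin n)) ‖y‖).exists_bound_of_continuousOn
    hq.continuousOn
  have hmem : ∀ R : SOn n, matAct R.1 y ∈ Metric.closedBall (0 : EuclideanSpace ℝ (Fin n)) ‖y‖ := by
    intro R
    rw [Metric.mem_closedBall, dist_zero_right, norm_matAct]
  have hf : Continuous fun R : SOn n => q (matAct R.1 y) := hq.comp (continuous_matAct_left y)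
  have hb : ∀ R : SOn n, ‖q (matAct R.1 y)‖ ≤ C := fun R => hC _ (hmem R)
  have key := integral_comp_mul_right μ (fun R => q (matAct R.1 y)) hf C hb T
  rw [← key]
  congr 1
  ext R
  rw [matAct_mul]
  congr 2

end invariance
theorem stmt3 (n : ℕ) (hn : 2 ≤ n) (q : EuclideanSpace ℝ (Fin n) → ℝ) (hq : Continuous q)
    (μ : Measure (SOn n)) [IsProbabilityMeasure μ] [μ.IsMulLeftInvariant] :
    ∫ R : SOn n,
        (∫ x in Metric.closedBall (0 : EuclideanSpace ℝ (Fin n)) 1,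
          (q x - q (matAct (R : Matrix (Fin n) (Fin n) ℝ) x)) ^ 2) ∂μ =
      2 * ∫ x in Metric.closedBall (0 : EuclideanSpace ℝ (Fin n)) 1,
        (q x - ∫ R : SOn n, q (matAct (R : Matrix (Fin n) (Fin n) ℝ) x) ∂μ) ^ 2 := by
  classical
  set B : Set (EuclideanSpace ℝ (Fin n)) := Metric.closedBall 0 1 with hBdef
  have hBmeas : MeasurableSet B := measurableSet_closedBall
  have hBcomp : IsCompact B := isCompact_closedBall _ _
  haveI hfin : IsFiniteMeasure (volume.restrict B) := by
    constructor
    rw [Measure.restrict_apply_univ]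
    exact hBcomp.measure_lt_top
  obtain ⟨M, hM⟩ := hBcomp.exists_bound_of_continuousOn hq.continuousOn
  have hM0 : 0 ≤ M := le_trans (norm_nonneg (q 0))
    (hM 0 (by rw [hBdef]; exact Metric.mem_closedBall_self (by norm_num)))
  have hnormB : ∀ {x : EuclideanSpace ℝ (Fin n)}, x ∈ B → ‖x‖ ≤ 1 := by
    intro x hx
    rwa [hBdef, Metric.mem_closedBall, dist_zero_right] at hx
  have hmemB : ∀ (S : SOn n) {x : EuclideanSpace ℝ (Fin n)}, x ∈ B → matAct S.1 x ∈ B := by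
    intro S x hx
    rw [hBdef, Metric.mem_closedBall, dist_zero_right, norm_matAct]
    exact hnormB hx
  -- the rotational average
  set P : EuclideanSpace ℝ (Fin n) → ℝ := fun x => ∫ R : SOn n, q (matAct R.1 x) ∂μ with hPdef
  have hcQ : Continuous fun p : SOn n × EuclideanSpace ℝ (Fin n) => q (matAct p.1.1 p.2) :=
    hq.comp continuous_matAct2
  have hcQ' : Continuous fun p : EuclideanSpace ℝ (Fin n) × SOn n => q (matAct p.2.1 p.1) :=
    hq.comp (continuous_matAct2.comp (continuous_snd.prodMk continuous_fst))
  have hqc : ∀ S : SOn n, Continuous fun x : EuclideanSpace ℝ (Fin n) => q (matAct S.1 x) :=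
    fun S => hq.comp (continuous_matAct2.comp (continuous_const.prodMk continuous_id))
  have hPsm : StronglyMeasurable P :=
    (hcQ'.stronglyMeasurable).integral_prod_right'
  have hPbound : ∀ x ∈ B, ‖P x‖ ≤ M := by
    intro x hx
    have h1 : ∀ᵐ R : SOn n ∂μ, ‖q (matAct R.1 x)‖ ≤ M :=
      Filter.Eventually.of_forall fun R => hM _ (hmemB R hx)
    have := norm_integral_le_of_norm_le_const h1
    simpa [measure_univ] using this
  have hPinv : ∀ (T : SOn n) (y : EuclideanSpace ℝ (Fin n)), P (matAct T.1 y) = P y :=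
    fun T y => integral_matAct_matAct μ q hq T y
  -- a.e. membership in B for product measures
  have aeB1 : ∀ᵐ p : SOn n × EuclideanSpace ℝ (Fin n) ∂(μ.prod (volume.restrict B)), p.2 ∈ B := by
    rw [MeasureTheory.ae_iff]
    have hset : {p : SOn n × EuclideanSpace ℝ (Fin n) | ¬ p.2 ∈ B} = Set.univ ×ˢ Bᶜ := by
      ext p; simp
    rw [hset, Measure.prod_prod]
    have : (volume.restrict B) Bᶜ = 0 := by
      rw [Measure.restrict_apply hBmeas.compl]; simp
    rw [this, mul_zero]
  have aeB2 : ∀ᵐ p : EuclideanSpace ℝ (Fin n) × SOn n ∂((volume.restrict B).prod μ), p.1 ∈ B := by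
    rw [MeasureTheory.ae_iff]
    have hset : {p : EuclideanSpace ℝ (Fin n) × SOn n | ¬ p.1 ∈ B} = Bᶜ ×ˢ Set.univ := by
      ext p; simp
    rw [hset, Measure.prod_prod]
    have : (volume.restrict B) Bᶜ = 0 := by
      rw [Measure.restrict_apply hBmeas.compl]; simp
    rw [this, zero_mul]
  -- basic integrabilities on B
  have hqq_int : IntegrableOn (fun x => (q x)^2) B volume :=
    ((hq.pow 2).continuousOn).integrableOn_compact hBcomp
  have hqqS_int : ∀ S : SOn n, IntegrableOn
      (fun x => q x * q (matAct S.1 x)) B volume :=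
    fun S => ((hq.mul (hqc S)).continuousOn).integrableOn_compact hBcomp
  have hqS2_int : ∀ S : SOn n, IntegrableOn
      (fun x => (q (matAct S.1 x))^2) B volume :=
    fun S => (((hqc S).pow 2).continuousOn).integrableOn_compact hBcomp
  have hqP_int : IntegrableOn (fun x => q x * P x) B volume := by
    apply Integrable.mono' (integrable_const (M * M))
    · exact (hq.aestronglyMeasurable.mul hPsm.aestronglyMeasurable).restrict
    · refine (ae_restrict_iff' hBmeas).2 (Filter.Eventually.of_forall fun x hx => ?_)
      rw [norm_mul]
      exact mul_le_mul (hM x hx) (hPbound x hx) (norm_nonneg _) hM0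
  have hPP_int : IntegrableOn (fun x => P x * P x) B volume := by
    apply Integrable.mono' (integrable_const (M * M))
    · exact (hPsm.aestronglyMeasurable.mul hPsm.aestronglyMeasurable).restrict
    · refine (ae_restrict_iff' hBmeas).2 (Filter.Eventually.of_forall fun x hx => ?_)
      rw [norm_mul]
      exact mul_le_mul (hPbound x hx) (hPbound x hx) (norm_nonneg _) hM0
  -- key quantities
  set A : ℝ := ∫ x in B, (q x)^2 with hAdef
  set c : SOn n → ℝ := fun S => ∫ x in B, q x * q (matAct S.1 x) with hcdef
  set I1 : ℝ := ∫ S : SOn n, c S ∂μ with hI1def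
  -- product integrabilities
  have hH1 : Integrable (fun p : SOn n × EuclideanSpace ℝ (Fin n) =>
      q p.2 * q (matAct p.1.1 p.2)) (μ.prod (volume.restrict B)) := by
    apply Integrable.mono' (integrable_const (M * M))
    · exact ((hq.comp continuous_snd).mul hcQ).aestronglyMeasurable
    · refine aeB1.mono fun p hp => ?_
      rw [norm_mul]
      exact mul_le_mul (hM _ hp) (hM _ (hmemB p.1 hp)) (norm_nonneg _) hM0
  have hH2 : Integrable (fun p : EuclideanSpace ℝ (Fin n) × SOn n =>
      q p.1 * q (matAct p.2.1 p.1)) ((volume.restrict B).prod μ) := by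
    apply Integrable.mono' (integrable_const (M * M))
    · exact ((hq.comp continuous_fst).mul hcQ').aestronglyMeasurable
    · refine aeB2.mono fun p hp => ?_
      rw [norm_mul]
      exact mul_le_mul (hM _ hp) (hM _ (hmemB p.2 hp)) (norm_nonneg _) hM0
  have hH3 : Integrable (fun p : EuclideanSpace ℝ (Fin n) × SOn n =>
      q (matAct p.2.1 p.1) * P p.1) ((volume.restrict B).prod μ) := by
    apply Integrable.mono' (integrable_const (M * M))
    · exact hcQ'.aestronglyMeasurable.mul
        ((hPsm.comp_measurable measurable_fst).aestronglyMeasurable)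
    · refine aeB2.mono fun p hp => ?_
      rw [norm_mul]
      exact mul_le_mul (hM _ (hmemB p.2 hp)) (hPbound _ hp) (norm_nonneg _) hM0
  have hc_int : Integrable c μ := hH1.integral_prod_left
  -- step 1: inner integral on the left
  have step1 : ∀ S : SOn n,
      ∫ x in B, (q x - q (matAct S.1 x))^2 = 2*A - 2*c S := by
    intro S
    have hA' : ∫ x in B, (q (matAct S.1 x))^2 = A := by
      rw [hAdef]
      exact setIntegral_matAct S (fun y => (q y)^2)
    have hkey : ∫ x in B, (q x - q (matAct S.1 x))^2
        = (∫ x in B, (q x)^2) - 2 * (∫ x in B, q x * q (matAct S.1 x))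
          + ∫ x in B, (q (matAct S.1 x))^2 :=
      integral_sub_sq (volume.restrict B) q (fun x => q (matAct S.1 x))
        hqq_int (hqqS_int S) (hqS2_int S)
    rw [hkey, hA', ← hAdef, hcdef]
    ring
  -- LHS
  have hLHS : ∫ S : SOn n, (∫ x in B, (q x - q (matAct S.1 x))^2) ∂μ = 2*A - 2*I1 := by
    rw [integral_congr_ae (Filter.Eventually.of_forall step1)]
    rw [integral_sub (integrable_const _) (hc_int.const_mul 2)]
    rw [integral_const, integral_const_mul]
    rw [hI1def]
    simp [measure_univ]
  -- q * P
  have hQP : ∫ x in B, q x * P x = I1 := by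
    have e1 : ∫ x in B, q x * P x
        = ∫ x in B, ∫ S : SOn n, q x * q (matAct S.1 x) ∂μ := by
      refine setIntegral_congr_fun hBmeas fun x _ => ?_
      rw [hPdef]
      exact (integral_const_mul (q x) _).symm
    have e2 : ∫ x in B, (∫ S : SOn n, q x * q (matAct S.1 x) ∂μ)
        = ∫ S : SOn n, (∫ x in B, q x * q (matAct S.1 x)) ∂μ :=
      integral_integral_swap hH2
    rw [e1, e2, hI1def]
  -- P squared
  have hPP : ∫ x in B, P x * P x = I1 := by
    have e1 : ∫ x in B, P x * P x
        = ∫ x in B, ∫ S : SOn n, q (matAct S.1 x) * P x ∂μ := by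
      refine setIntegral_congr_fun hBmeas fun x _ => ?_
      have : ∫ S : SOn n, q (matAct S.1 x) * P x ∂μ
          = (∫ S : SOn n, q (matAct S.1 x) ∂μ) * P x := integral_mul_const (P x) _
      rw [this]
    have e2 : ∫ x in B, (∫ S : SOn n, q (matAct S.1 x) * P x ∂μ)
        = ∫ S : SOn n, (∫ x in B, q (matAct S.1 x) * P x) ∂μ :=
      integral_integral_swap hH3
    have e3 : ∀ S : SOn n, ∫ x in B, q (matAct S.1 x) * P x = I1 := by
      intro S
      have hcoe : (S⁻¹).1 * S.1 = (1 : Matrix (Fin n) (Fin n) ℝ) := by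
        have : ((S⁻¹ * S : SOn n) : Matrix (Fin n) (Fin n) ℝ)
            = ((1 : SOn n) : Matrix (Fin n) (Fin n) ℝ) := by rw [inv_mul_cancel]
        exact this
      have hco : ∀ x : EuclideanSpace ℝ (Fin n), q (matAct S.1 x) * P x
          = (fun y => q y * P (matAct (S⁻¹).1 y)) (matAct S.1 x) := by
        intro x
        simp only
        rw [matAct_mul, hcoe, matAct_one]
      rw [show (fun x => q (matAct S.1 x) * P x)
          = fun x => (fun y => q y * P (matAct (S⁻¹).1 y)) (matAct S.1 x) from funext hco]
      rw [setIntegral_matAct S (fun y => q y * P (matAct (S⁻¹).1 y))]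
      have : ∀ y : EuclideanSpace ℝ (Fin n), q y * P (matAct (S⁻¹).1 y) = q y * P y := by
        intro y; rw [hPinv]
      rw [show (fun y => q y * P (matAct (S⁻¹).1 y)) = fun y => q y * P y from funext this]
      exact hQP
    rw [e1, e2]
    rw [integral_congr_ae (Filter.Eventually.of_forall e3)]
    simp [measure_univ]
  -- RHS inner integral
  have hRHS : ∫ x in B, (q x - P x)^2 = A - I1 := by
    have hPP2_int : IntegrableOn (fun x => (P x)^2) B volume := by
      apply hPP_int.congr
      refine Filter.Eventually.of_forall fun x => ?_
      simp [sq]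
    have hPP' : ∫ x in B, (P x)^2 = I1 := by
      rw [← hPP]
      refine setIntegral_congr_fun hBmeas fun x _ => ?_
      simp [sq]
    have hkey : ∫ x in B, (q x - P x)^2
        = (∫ x in B, (q x)^2) - 2 * (∫ x in B, q x * P x) + ∫ x in B, (P x)^2 :=
      integral_sub_sq (volume.restrict B) q P hqq_int hqP_int hPP2_int
    rw [hkey, hQP, hPP', ← hAdef]
    ring
  rw [hLHS]
  have : (∫ x in B, (q x - ∫ R : SOn n, q (matAct (R : Matrix (Fin n) (Fin n) ℝ) x) ∂μ) ^ 2)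
      = ∫ x in B, (q x - P x)^2 := rfl
  rw [this, hRHS]
  ring
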